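/- Suppose (T, Z) is a pair of random elements with T > 0 a.s., Z taking values in ℝ^d with law μ, and for every t ≥ 0 and every Borel set B ⊆ ℝ^d, P(T ≤ t, Z ∈ B) = ∫_B G(Γ(t) e^{θᵀz}) μ(dz). Then the random variable ε := log Γ(T) + θᵀZ is independent of Z, and exp(ε) has distribution function G, i.e. P(exp(ε) ≤ x) = G(x) for all x ≥ 0. Equivalently, the scale transformation model is the linear regression model log Γ(T) = −θᵀZ + ε with Z and ε independent. -/

import Mathlib

open Matrix Set MeasureTheory

section Stmt4Aux
open Filter

/-- Inverse of Γ on [0,∞) defined monotonically. -/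
noncomputable def stmt4Inv (Γ : ℝ → ℝ) (y : ℝ) : ℝ := sInf {t | 0 ≤ t ∧ y ≤ Γ t}

lemma stmt4Inv_spec (Γ : ℝ → ℝ) (hΓmono : StrictMonoOn Γ (Ici 0))
    (hΓbij : BijOn Γ (Ici 0) (Ici 0)) {y : ℝ} (hy : 0 ≤ y) :
    0 ≤ stmt4Inv Γ y ∧ Γ (stmt4Inv Γ y) = y := by
  obtain ⟨t0, ht0, hΓt0⟩ := hΓbij.surjOn (show y ∈ Ici 0 from hy)
  have hset : {t | 0 ≤ t ∧ y ≤ Γ t} = Ici t0 := by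
    ext t
    simp only [mem_setOf_eq, mem_Ici]
    constructor
    · rintro ⟨ht, hyt⟩
      have := hΓt0 ▸ hyt
      exact (hΓmono.le_iff_le ht0 ht).mp this
    · intro h
      exact ⟨le_trans ht0 h, hΓt0 ▸ (hΓmono.monotoneOn ht0 (le_trans ht0 h) h)⟩
  rw [stmt4Inv, hset, csInf_Ici]
  exact ⟨ht0, hΓt0⟩

lemma stmt4Inv_mono (Γ : ℝ → ℝ) (hΓ0 : Γ 0 = 0)
    (hΓbij : BijOn Γ (Ici 0) (Ici 0)) : Monotone (stmt4Inv Γ) := by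
  intro y1 y2 h
  have hne : {t | 0 ≤ t ∧ y2 ≤ Γ t}.Nonempty := by
    rcases le_or_gt y2 0 with h2 | h2
    · exact ⟨0, le_refl 0, by rw [hΓ0]; exact h2⟩
    · obtain ⟨t0, ht0, hΓt0⟩ := hΓbij.surjOn (show y2 ∈ Ici 0 from h2.le)
      exact ⟨t0, ht0, hΓt0.symm.le⟩
  have hbdd : BddBelow {t | 0 ≤ t ∧ y1 ≤ Γ t} := ⟨0, fun t ht => ht.1⟩
  exact csInf_le_csInf hbdd hne (fun t ht => ⟨ht.1, le_trans h ht.2⟩)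

/-- Regularized version of the conditional CDF `G (Γ t e^{θ·z})`, made globally continuous. -/
noncomputable def s4g (d : ℕ) (θ : Fin d → ℝ) (Γ G : ℝ → ℝ) (t : ℝ) (z : Fin d → ℝ) : ℝ :=
  G (max (Γ (max t 0) * Real.exp (θ ⬝ᵥ z)) 0)

section s4g
variable (d : ℕ) (θ : Fin d → ℝ) (Γ G : ℝ → ℝ)

lemma s4c_cont : Continuous fun z : Fin d → ℝ => θ ⬝ᵥ z := by
  simp only [dotProduct]
  exact continuous_finset_sum _ fun i _ => continuous_const.mul (continuous_apply i)

lemma s4g_cont (hΓcont : ContinuousOn Γ (Ici 0)) (hGcont : ContinuousOn G (Ici 0)) :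
    Continuous fun p : ℝ × (Fin d → ℝ) => s4g d θ Γ G p.1 p.2 := by
  have hΓ' : Continuous fun t : ℝ => Γ (max t 0) :=
    hΓcont.comp_continuous (continuous_id.max continuous_const) fun t => le_max_right t 0
  have hG' : Continuous fun y : ℝ => G (max y 0) :=
    hGcont.comp_continuous (continuous_id.max continuous_const) fun y => le_max_right y 0
  exact hG'.comp ((hΓ'.comp continuous_fst).mul
    (Real.continuous_exp.comp ((s4c_cont d θ).comp continuous_snd)))

lemma s4g_Ico (hGcod : ∀ x ∈ Ici (0:ℝ), G x ∈ Ico (0:ℝ) 1) (t : ℝ) (z : Fin d → ℝ) :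
    s4g d θ Γ G t z ∈ Ico (0:ℝ) 1 :=
  hGcod _ (mem_Ici.mpr (le_max_right _ 0))

lemma s4g_eq (hΓbij : BijOn Γ (Ici 0) (Ici 0)) {t : ℝ} (ht : 0 ≤ t) (z : Fin d → ℝ) :
    s4g d θ Γ G t z = G (Γ t * Real.exp (θ ⬝ᵥ z)) := by
  have h1 : max t 0 = t := max_eq_left ht
  have h2 : 0 ≤ Γ t := by
    have : Γ t ∈ Ici (0:ℝ) := hΓbij.mapsTo ht
    exact this
  rw [s4g, h1, max_eq_left (mul_nonneg h2 (Real.exp_pos _).le)]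
end s4g

lemma s4_hlaw' (d : ℕ) (θ : Fin d → ℝ) (Γ G : ℝ → ℝ)
    (hΓcont : ContinuousOn Γ (Ici 0)) (hΓbij : BijOn Γ (Ici 0) (Ici 0))
    (hGcont : ContinuousOn G (Ici 0)) (hGcod : ∀ x ∈ Ici (0:ℝ), G x ∈ Ico (0:ℝ) 1)
    {Ω : Type*} [MeasurableSpace Ω] (P : Measure Ω) [IsProbabilityMeasure P]
    (T : Ω → ℝ) (Z : Ω → Fin d → ℝ) (hZ : Measurable Z)
    (hlaw : ∀ t : ℝ, 0 ≤ t → ∀ B : Set (Fin d → ℝ), MeasurableSet B →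
      P {ω | T ω ≤ t ∧ Z ω ∈ B} =
        ENNReal.ofReal (∫ z in B, G (Γ t * Real.exp (θ ⬝ᵥ z)) ∂(P.map Z)))
    {t : ℝ} (ht : 0 ≤ t) {B : Set (Fin d → ℝ)} (hB : MeasurableSet B) :
    P {ω | T ω ≤ t ∧ Z ω ∈ B} =
      ∫⁻ z in B, ENNReal.ofReal (s4g d θ Γ G t z) ∂(P.map Z) := by
  have : IsProbabilityMeasure (P.map Z) := Measure.isProbabilityMeasure_map hZ.aemeasurable
  rw [hlaw t ht B hB]
  have hieq : ∀ z, G (Γ t * Real.exp (θ ⬝ᵥ z)) = s4g d θ Γ G t z :=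
    fun z => (s4g_eq d θ Γ G hΓbij ht z).symm
  simp only [hieq]
  have hmeas : Measurable (s4g d θ Γ G t) :=
    ((s4g_cont d θ Γ G hΓcont hGcont).comp (Continuous.prodMk_right t)).measurable
  rw [ofReal_integral_eq_lintegral_ofReal]
  · exact Integrable.mono' (integrable_const 1) hmeas.aestronglyMeasurable
      (Filter.Eventually.of_forall fun z => by
        rw [Real.norm_eq_abs, abs_of_nonneg (s4g_Ico d θ Γ G hGcod t z).1]
        exact (s4g_Ico d θ Γ G hGcod t z).2.le)
  · exact Filter.Eventually.of_forall fun z => (s4g_Ico d θ Γ G hGcod t z).1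

lemma s4_key (d : ℕ) (θ : Fin d → ℝ) (Γ G : ℝ → ℝ)
    (hΓcont : ContinuousOn Γ (Ici 0)) (hΓbij : BijOn Γ (Ici 0) (Ici 0))
    (hGcont : ContinuousOn G (Ici 0)) (hGcod : ∀ x ∈ Ici (0:ℝ), G x ∈ Ico (0:ℝ) 1)
    {Ω : Type*} [MeasurableSpace Ω] (P : Measure Ω) [IsProbabilityMeasure P]
    (T : Ω → ℝ) (Z : Ω → Fin d → ℝ) (hT : Measurable T) (hZ : Measurable Z)
    (hlaw : ∀ t : ℝ, 0 ≤ t → ∀ B : Set (Fin d → ℝ), MeasurableSet B →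
      P {ω | T ω ≤ t ∧ Z ω ∈ B} =
        ENNReal.ofReal (∫ z in B, G (Γ t * Real.exp (θ ⬝ᵥ z)) ∂(P.map Z)))
    (τ : (Fin d → ℝ) → ℝ) (hτ : Measurable τ) (hτ0 : ∀ z, 0 ≤ τ z)
    (B : Set (Fin d → ℝ)) (hB : MeasurableSet B) :
    P {ω | T ω ≤ τ (Z ω) ∧ Z ω ∈ B} =
      ∫⁻ z in B, ENNReal.ofReal (s4g d θ Γ G (τ z) z) ∂(P.map Z) := by
  have hμprob : IsProbabilityMeasure (P.map Z) := Measure.isProbabilityMeasure_map hZ.aemeasurable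
  set μ := P.map Z with hμ
  set τn : ℕ → (Fin d → ℝ) → ℝ := fun n z => (⌈τ z * 2 ^ n⌉₊ : ℝ) / 2 ^ n with hτn
  have hτnmeas : ∀ n, Measurable (τn n) := fun n =>
    (measurable_from_top.comp (Nat.measurable_ceil.comp (hτ.mul measurable_const))).div_const _
  have hle : ∀ n z, τ z ≤ τn n z := by
    intro n z
    rw [hτn]
    rw [le_div_iff₀ (by positivity : (0:ℝ) < 2 ^ n)]
    exact Nat.le_ceil _
  have hub : ∀ n z, τn n z ≤ τ z + ((2:ℝ) ^ n)⁻¹ := by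
    intro n z
    rw [hτn]
    have h2 : (0:ℝ) < 2 ^ n := by positivity
    rw [div_le_iff₀ h2]
    have heq : (τ z + ((2:ℝ) ^ n)⁻¹) * 2 ^ n = τ z * 2 ^ n + 1 := by field_simp
    rw [heq]
    exact (Nat.ceil_lt_add_one (mul_nonneg (hτ0 z) h2.le)).le
  have hanti : ∀ z, Antitone fun n => τn n z := by
    intro z
    apply antitone_nat_of_succ_le
    intro n
    show (⌈τ z * 2 ^ (n + 1)⌉₊ : ℝ) / 2 ^ (n + 1) ≤ (⌈τ z * 2 ^ n⌉₊ : ℝ) / 2 ^ n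
    have h2 : (0:ℝ) < 2 ^ n := by positivity
    rw [div_le_div_iff₀ (by positivity) h2]
    have key : (⌈τ z * 2 ^ (n + 1)⌉₊ : ℝ) ≤ 2 * (⌈τ z * 2 ^ n⌉₊ : ℝ) := by
      have h2' : (2 * (⌈τ z * 2 ^ n⌉₊ : ℝ)) = ((2 * ⌈τ z * 2 ^ n⌉₊ : ℕ) : ℝ) := by push_cast; ring
      rw [h2']
      have : τ z * 2 ^ (n + 1) ≤ ((2 * ⌈τ z * 2 ^ n⌉₊ : ℕ) : ℝ) := by
        push_cast
        nlinarith [Nat.le_ceil (τ z * 2 ^ n), pow_succ (2:ℝ) n]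
      exact Nat.cast_le.mpr (Nat.ceil_le.mpr this)
    nlinarith [key, pow_succ (2:ℝ) n, (by positivity : (0:ℝ) ≤ (⌈τ z * 2 ^ n⌉₊ : ℝ))]
  have htend : ∀ z, Filter.Tendsto (fun n => τn n z) Filter.atTop (nhds (τ z)) := by
    intro z
    have h1 : Filter.Tendsto (fun n : ℕ => τ z + ((2:ℝ) ^ n)⁻¹) Filter.atTop (nhds (τ z + 0)) :=
      tendsto_const_nhds.add
        (tendsto_inv_atTop_zero.comp (tendsto_pow_atTop_atTop_of_one_lt one_lt_two))
    rw [add_zero] at h1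
    exact tendsto_of_tendsto_of_tendsto_of_le_of_le tendsto_const_nhds h1
      (fun n => hle n z) (fun n => hub n z)
  -- the identity for each dyadic approximation
  have step : ∀ n, P {ω | T ω ≤ τn n (Z ω) ∧ Z ω ∈ B} =
      ∫⁻ z in B, ENNReal.ofReal (s4g d θ Γ G (τn n z) z) ∂μ := by
    intro n
    set A : ℕ → Set (Fin d → ℝ) := fun k => {z | ⌈τ z * 2 ^ n⌉₊ = k} with hA
    have hAmeas : ∀ k, MeasurableSet (A k) :=
      fun k => (Nat.measurable_ceil.comp (hτ.mul measurable_const)) (measurableSet_singleton k)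
    have hAdisj : Pairwise (Function.onFun Disjoint A) :=
      fun k l hkl => Set.disjoint_left.mpr fun z hz1 hz2 => hkl (hz1.symm.trans hz2)
    have hAunion : (⋃ k, A k) = univ :=
      eq_univ_of_forall fun z => mem_iUnion.mpr ⟨⌈τ z * 2 ^ n⌉₊, rfl⟩
    have hτnA : ∀ k, ∀ z ∈ A k, τn n z = (k : ℝ) / 2 ^ n := by
      intro k z hz
      rw [hτn]
      simp only
      rw [show ⌈τ z * 2 ^ n⌉₊ = k from hz]
    have hsets : {ω | T ω ≤ τn n (Z ω) ∧ Z ω ∈ B} =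
        ⋃ k : ℕ, {ω | T ω ≤ (k : ℝ) / 2 ^ n ∧ Z ω ∈ B ∩ A k} := by
      ext ω
      simp only [mem_setOf_eq, mem_iUnion, mem_inter_iff]
      constructor
      · rintro ⟨h1, h2⟩
        exact ⟨⌈τ (Z ω) * 2 ^ n⌉₊, (hτnA _ _ rfl) ▸ h1, h2, rfl⟩
      · rintro ⟨k, h1, h2, h3⟩
        exact ⟨by rw [hτnA k _ h3]; exact h1, h2⟩
    have hBAmeas : ∀ k, MeasurableSet (B ∩ A k) := fun k => hB.inter (hAmeas k)
    rw [hsets, measure_iUnion ?_ ?_]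
    · have hterm : ∀ k : ℕ, P {ω | T ω ≤ (k : ℝ) / 2 ^ n ∧ Z ω ∈ B ∩ A k} =
          ∫⁻ z in B ∩ A k, ENNReal.ofReal (s4g d θ Γ G (τn n z) z) ∂μ := by
        intro k
        rw [s4_hlaw' d θ Γ G hΓcont hΓbij hGcont hGcod P T Z hZ hlaw
          (by positivity) (hBAmeas k)]
        exact setLIntegral_congr_fun (hBAmeas k)
          (fun z hz => by rw [hτnA k z hz.2])
      rw [tsum_congr hterm,
        ← lintegral_iUnion hBAmeas
          (fun k l hkl => (hAdisj hkl).mono inter_subset_right inter_subset_right) _]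
      congr 1
      rw [← inter_iUnion, hAunion, inter_univ]
    · exact fun k l hkl => Set.disjoint_left.mpr fun ω h1 h2 =>
        Set.disjoint_left.mp (hAdisj hkl) h1.2.2 h2.2.2
    · exact fun k => (measurableSet_le hT measurable_const).inter (hZ (hBAmeas k))
  -- limits on both sides
  have hSmeas : ∀ n, MeasurableSet {ω | T ω ≤ τn n (Z ω) ∧ Z ω ∈ B} :=
    fun n => (measurableSet_le hT ((hτnmeas n).comp hZ)).inter (hZ hB)
  have hSanti : Antitone fun n => {ω | T ω ≤ τn n (Z ω) ∧ Z ω ∈ B} :=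
    fun n m hnm ω hω => ⟨hω.1.trans (hanti (Z ω) hnm), hω.2⟩
  have hSinter : (⋂ n, {ω | T ω ≤ τn n (Z ω) ∧ Z ω ∈ B}) =
      {ω | T ω ≤ τ (Z ω) ∧ Z ω ∈ B} := by
    ext ω
    simp only [mem_iInter, mem_setOf_eq]
    constructor
    · intro h
      exact ⟨ge_of_tendsto (htend (Z ω)) (Filter.Eventually.of_forall fun n => (h n).1), (h 0).2⟩
    · intro h n
      exact ⟨h.1.trans (hle n (Z ω)), h.2⟩
  have hLHS := tendsto_measure_iInter_atTop (μ := P)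
    (fun n => (hSmeas n).nullMeasurableSet) hSanti ⟨0, measure_ne_top P _⟩
  rw [hSinter] at hLHS
  have hFmeas : ∀ n, Measurable fun z => ENNReal.ofReal (s4g d θ Γ G (τn n z) z) := by
    intro n
    exact ENNReal.measurable_ofReal.comp
      (((s4g_cont d θ Γ G hΓcont hGcont).measurable).comp ((hτnmeas n).prodMk measurable_id))
  have hRHS : Filter.Tendsto (fun n => ∫⁻ z in B, ENNReal.ofReal (s4g d θ Γ G (τn n z) z) ∂μ)
      Filter.atTop (nhds (∫⁻ z in B, ENNReal.ofReal (s4g d θ Γ G (τ z) z) ∂μ)) := by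
    apply tendsto_lintegral_of_dominated_convergence (fun _ => 1) hFmeas
    · intro n
      exact Filter.Eventually.of_forall fun z =>
        ENNReal.ofReal_le_one.mpr (s4g_Ico d θ Γ G hGcod _ z).2.le
    · rw [lintegral_one]
      exact measure_ne_top _ _
    · refine Filter.Eventually.of_forall fun z => ?_
      have hcont : Continuous fun t => s4g d θ Γ G t z :=
        (s4g_cont d θ Γ G hΓcont hGcont).comp (Continuous.prodMk continuous_id continuous_const)
      exact (ENNReal.continuous_ofReal.tendsto _).comp ((hcont.tendsto _).comp (htend z))
  have hLHS' : Filter.Tendsto (fun n => ∫⁻ z in B, ENNReal.ofReal (s4g d θ Γ G (τn n z) z) ∂μ)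
      Filter.atTop (nhds (P {ω | T ω ≤ τ (Z ω) ∧ Z ω ∈ B})) := by
    have heq : (fun n => ∫⁻ z in B, ENNReal.ofReal (s4g d θ Γ G (τn n z) z) ∂μ) =
        fun n => P {ω | T ω ≤ τn n (Z ω) ∧ Z ω ∈ B} := funext fun n => (step n).symm
    rw [heq]
    exact hLHS
  exact tendsto_nhds_unique hLHS' hRHS

end Stmt4Aux

/-- Suppose `(T, Z)` is a pair of random elements with `T > 0` a.s., `Z`
taking values in `ℝ^d` with law `μ`, and for every `t ≥ 0` and every Borel set
`B ⊆ ℝ^d`, `P(T ≤ t, Z ∈ B) = ∫_B G(Γ(t) e^{θᵀz}) μ(dz)`. Then the random variable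
`ε := log Γ(T) + θᵀZ` is independent of `Z`, and `exp(ε)` has distribution function
`G`, i.e. `P(exp(ε) ≤ x) = G(x)` for all `x ≥ 0`. Equivalently, the scale
transformation model is the linear regression model `log Γ(T) = −θᵀZ + ε` with
`Z` and `ε` independent. -/
theorem stmt_4
    (d : ℕ) (θ : Fin d → ℝ) (Γ G : ℝ → ℝ)
    (hΓ0 : Γ 0 = 0)
    (hΓmono : StrictMonoOn Γ (Ici 0))
    (hΓcont : ContinuousOn Γ (Ici 0))
    (hΓbij : BijOn Γ (Ici 0) (Ici 0))
    (hG0 : G 0 = 0)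
    (hGmono : StrictMonoOn G (Ici 0))
    (hGcont : ContinuousOn G (Ici 0))
    (hGcod : ∀ x ∈ Ici (0:ℝ), G x ∈ Ico (0:ℝ) 1)
    (hGlim : Filter.Tendsto G Filter.atTop (nhds 1))
    {Ω : Type*} [MeasurableSpace Ω] (P : Measure Ω) [IsProbabilityMeasure P]
    (T : Ω → ℝ) (Z : Ω → Fin d → ℝ)
    (hT : Measurable T) (hZ : Measurable Z)
    (hTpos : ∀ᵐ ω ∂P, 0 < T ω)
    (hlaw : ∀ t : ℝ, 0 ≤ t → ∀ B : Set (Fin d → ℝ), MeasurableSet B →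
      P {ω | T ω ≤ t ∧ Z ω ∈ B} =
        ENNReal.ofReal (∫ z in B, G (Γ t * Real.exp (θ ⬝ᵥ z)) ∂(P.map Z))) :
    ProbabilityTheory.IndepFun (fun ω => Real.log (Γ (T ω)) + θ ⬝ᵥ Z ω) Z P ∧
      ∀ x : ℝ, 0 ≤ x →
        P {ω | Real.exp (Real.log (Γ (T ω)) + θ ⬝ᵥ Z ω) ≤ x} = ENNReal.ofReal (G x) := by
  have hc : Continuous fun z : Fin d → ℝ => θ ⬝ᵥ z := s4c_cont d θ
  set ε' : Ω → ℝ := fun ω => Real.log (Γ (max (T ω) 0)) + θ ⬝ᵥ Z ω with hε'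
  have hΓ'cont : Continuous fun t : ℝ => Γ (max t 0) :=
    hΓcont.comp_continuous (continuous_id.max continuous_const) fun t => le_max_right t 0
  have hε'meas : Measurable ε' :=
    (Real.measurable_log.comp (hΓ'cont.measurable.comp hT)).add (hc.measurable.comp hZ)
  have hae : ε' =ᵐ[P] fun ω => Real.log (Γ (T ω)) + θ ⬝ᵥ Z ω := by
    filter_upwards [hTpos] with ω hω
    rw [hε']
    simp only [max_eq_left hω.le]
  -- the key product formula
  have star : ∀ s : ℝ, ∀ B : Set (Fin d → ℝ), MeasurableSet B →
      P ({ω | ε' ω ≤ s} ∩ Z ⁻¹' B) = ENNReal.ofReal (G (Real.exp s)) * P (Z ⁻¹' B) := by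
    intro s B hB
    set x := Real.exp s with hx
    have hxpos : 0 < x := Real.exp_pos s
    set τ : (Fin d → ℝ) → ℝ := fun z => stmt4Inv Γ (x * Real.exp (-(θ ⬝ᵥ z))) with hτdef
    have hτspec : ∀ z, 0 ≤ τ z ∧ Γ (τ z) = x * Real.exp (-(θ ⬝ᵥ z)) := fun z =>
      stmt4Inv_spec Γ hΓmono hΓbij (mul_nonneg hxpos.le (Real.exp_pos _).le)
    have hτmeas : Measurable τ := (stmt4Inv_mono Γ hΓ0 hΓbij).measurable.comp
      (measurable_const.mul (Real.measurable_exp.comp hc.measurable.neg))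
    have hsetae : ({ω | ε' ω ≤ s} ∩ Z ⁻¹' B : Set Ω) =ᵐ[P]
        {ω | T ω ≤ τ (Z ω) ∧ Z ω ∈ B} := by
      rw [Filter.eventuallyEq_set]
      filter_upwards [hTpos] with ω hω
      have hΓT : 0 < Γ (T ω) := by
        have h0 : Γ 0 < Γ (T ω) := hΓmono (le_refl (0:ℝ)) hω.le hω
        rwa [hΓ0] at h0
      simp only [mem_inter_iff, mem_setOf_eq, mem_preimage]
      have key : ε' ω ≤ s ↔ T ω ≤ τ (Z ω) := by
        rw [hε']
        simp only [max_eq_left hω.le]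
        rw [← Real.exp_le_exp, Real.exp_add, Real.exp_log hΓT]
        have hiff : Γ (T ω) * Real.exp (θ ⬝ᵥ Z ω) ≤ x ↔
            Γ (T ω) ≤ x * Real.exp (-(θ ⬝ᵥ Z ω)) := by
          rw [Real.exp_neg, ← div_eq_mul_inv, le_div_iff₀ (Real.exp_pos _)]
        rw [hiff, ← (hτspec (Z ω)).2]
        exact hΓmono.le_iff_le hω.le (hτspec (Z ω)).1
      rw [key]
    rw [measure_congr hsetae,
      s4_key d θ Γ G hΓcont hΓbij hGcont hGcod P T Z hT hZ hlaw τ hτmeas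
        (fun z => (hτspec z).1) B hB]
    have hconst : ∀ z, s4g d θ Γ G (τ z) z = G x := by
      intro z
      rw [s4g_eq d θ Γ G hΓbij (hτspec z).1, (hτspec z).2, mul_assoc, ← Real.exp_add,
        neg_add_cancel, Real.exp_zero, mul_one]
    simp only [hconst]
    rw [setLIntegral_const, Measure.map_apply hZ hB]
  -- second conclusion
  have concl2 : ∀ x : ℝ, 0 ≤ x →
      P {ω | Real.exp (Real.log (Γ (T ω)) + θ ⬝ᵥ Z ω) ≤ x} = ENNReal.ofReal (G x) := by
    intro x hx
    rcases eq_or_lt_of_le hx with h0 | hxpos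
    · rw [← h0]
      have hempty : {ω | Real.exp (Real.log (Γ (T ω)) + θ ⬝ᵥ Z ω) ≤ (0:ℝ)} = (∅ : Set Ω) :=
        eq_empty_iff_forall_notMem.2 fun ω h => absurd h (not_le.mpr (Real.exp_pos _))
      rw [hempty, measure_empty, hG0, ENNReal.ofReal_zero]
    · have hsetae2 : ({ω | Real.exp (Real.log (Γ (T ω)) + θ ⬝ᵥ Z ω) ≤ x} : Set Ω) =ᵐ[P]
          ({ω | ε' ω ≤ Real.log x} ∩ Z ⁻¹' univ : Set Ω) := by
        rw [Filter.eventuallyEq_set]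
        filter_upwards [hTpos] with ω hω
        simp only [mem_setOf_eq, mem_inter_iff, mem_preimage, mem_univ, and_true]
        rw [hε']
        simp only [max_eq_left hω.le]
        rw [← Real.exp_log hxpos, Real.exp_le_exp, Real.log_exp]
      rw [measure_congr hsetae2, star (Real.log x) univ MeasurableSet.univ,
        Real.exp_log hxpos, preimage_univ, measure_univ, mul_one]
  refine ⟨?_, concl2⟩
  have indep' : ProbabilityTheory.IndepFun ε' Z P := by
    show ProbabilityTheory.Indep (MeasurableSpace.comap ε' inferInstance)
      (MeasurableSpace.comap Z inferInstance) P
    apply ProbabilityTheory.IndepSets.indep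
      (p1 := (preimage ε') '' (range Iic))
      (p2 := {S | ∃ B, MeasurableSet B ∧ Z ⁻¹' B = S})
    · exact hε'meas.comap_le
    · exact hZ.comap_le
    · rintro s ⟨u, ⟨a, rfl⟩, rfl⟩ t ⟨v, ⟨b, rfl⟩, rfl⟩ _
      exact ⟨Iic (min a b), ⟨min a b, rfl⟩, by rw [← Iic_inter_Iic, preimage_inter]⟩
    · rintro s ⟨B1, hB1, rfl⟩ t ⟨B2, hB2, rfl⟩ _
      exact ⟨B1 ∩ B2, hB1.inter hB2, Set.preimage_inter⟩
    · rw [BorelSpace.measurable_eq (α := ℝ), borel_eq_generateFrom_Iic ℝ,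
        MeasurableSpace.comap_generateFrom]
    · exact MeasurableSpace.comap_eq_generateFrom _ _
    · rintro s t ⟨u, ⟨a, rfl⟩, rfl⟩ ⟨B', hB', rfl⟩
      have h2 := star a univ MeasurableSet.univ
      rw [preimage_univ, measure_univ, mul_one, inter_univ] at h2
      have h1 : (ε' ⁻¹' Iic a : Set Ω) = {ω | ε' ω ≤ a} := rfl
      rw [h1]
      refine Filter.Eventually.of_forall fun u => ?_
      simp only [ProbabilityTheory.Kernel.const_apply]
      rw [star a B' hB', h2]
  exact indep'.congr hae (Filter.EventuallyEq.refl _ Z)
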